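/- Let Γ ⊆ ℝ^d be a closed convex set containing 0 and suppose (t/3)𝔹 ∩ L(θ, r/2) ⊄ Γ, where 𝔹 is a compact convex neighborhood of 0 and L(θ, s) is the closed cone of aperture s around direction θ. Then for t large enough, (t/2)𝔹 ∩ L(θ, r) ⊄ Γ⁺_{log t}. -/

import Mathlib

set_option maxHeartbeats 1000000
open Pointwise

lemma smul_set_subset_smul_set_of_le {E : Type*} [NormedAddCommGroup E] [NormedSpace ℝ E]
    {s : Set E} (hconv : Convex ℝ s) (h0 : (0:E) ∈ s) {a b : ℝ} (ha : 0 ≤ a) (hab : a ≤ b) :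
    a • s ⊆ b • s := by
  rcases eq_or_lt_of_le (ha.trans hab) with hb | hb
  · have haz : a = 0 := le_antisymm (hab.trans hb.symm.le) ha
    subst haz; rw [← hb]
  · rintro x ⟨y, hy, rfl⟩
    refine ⟨(a / b) • y, ?_, ?_⟩
    · exact hconv.smul_mem_of_zero_mem h0 hy ⟨div_nonneg ha hb.le, div_le_one_of_le₀ hab hb.le⟩
    · show b • ((a/b) • y) = a • y
      rw [smul_smul]; congr 1; field_simp

lemma separation_vector {d : ℕ} {Γ : Set (EuclideanSpace ℝ (Fin d))} (hcl : IsClosed Γ)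
    (hconv : Convex ℝ Γ) (h0 : (0:EuclideanSpace ℝ (Fin d)) ∈ Γ)
    {x : EuclideanSpace ℝ (Fin d)} (hx : x ∉ Γ) :
    ∃ (w : EuclideanSpace ℝ (Fin d)) (c ε : ℝ), ‖w‖ = 1 ∧ 0 < ε ∧
      (∀ γ ∈ Γ, inner (𝕜 := ℝ) w γ ≤ c) ∧ c + ε ≤ inner (𝕜 := ℝ) w x := by
  obtain ⟨f, u, hfΓ, hfx⟩ := geometric_hahn_banach_closed_point hconv hcl hx
  obtain ⟨w₀, rfl⟩ := (InnerProductSpace.toDual ℝ (EuclideanSpace ℝ (Fin d))).surjective f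
  simp only [InnerProductSpace.toDual_apply_apply] at hfΓ hfx
  have hw₀ : w₀ ≠ 0 := by
    rintro rfl
    have h1 := hfΓ 0 h0
    simp only [inner_zero_right, inner_zero_left] at h1 hfx
    linarith
  have hnw : (0:ℝ) < ‖w₀‖ := norm_pos_iff.mpr hw₀
  have hε : (0:ℝ) < (inner (𝕜 := ℝ) w₀ x - u) / ‖w₀‖ :=
    div_pos (by linarith) hnw
  refine ⟨‖w₀‖⁻¹ • w₀, u / ‖w₀‖, (inner (𝕜 := ℝ) w₀ x - u) / ‖w₀‖, ?_, hε, ?_, ?_⟩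
  · rw [norm_smul]; simp [hnw.ne']
  · intro γ hγ
    rw [real_inner_smul_left, div_eq_inv_mul]
    exact mul_le_mul_of_nonneg_left (hfΓ γ hγ).le (by positivity)
  · rw [real_inner_smul_left, ← add_div, div_eq_inv_mul]
    apply mul_le_mul_of_nonneg_left _ (by positivity)
    linarith

noncomputable def plusSet {d : ℕ} (l : ℝ) (Γ : Set (EuclideanSpace ℝ (Fin d))) :
    Set (EuclideanSpace ℝ (Fin d)) :=
  {v | Metric.infDist v Γ ≤ l}

/-- The cone `L(θ, r) = {a • v : a ∈ [0,∞), v ∈ B(θ, r)}`. -/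
def coneL {d : ℕ} (θ : EuclideanSpace ℝ (Fin d)) (r : ℝ) : Set (EuclideanSpace ℝ (Fin d)) :=
  {x | ∃ a : ℝ, 0 ≤ a ∧ ∃ v ∈ Metric.closedBall θ r, x = a • v}

/-- Geometric reduction at the start of the proof of Theorem 1: for `t` large enough,
if `(t/3)𝔹 ∩ L(θ, r/2) ⊄ Γ` for a closed convex `Γ ∋ 0`, then
`(t/2)𝔹 ∩ L(θ, r) ⊄ Γ⁺_{log t}`. -/
theorem geometric_reduction {d : ℕ} (𝔹 : Set (EuclideanSpace ℝ (Fin d)))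
    (h𝔹c : IsCompact 𝔹) (h𝔹conv : Convex ℝ 𝔹) (h𝔹0 : 𝔹 ∈ nhds (0 : EuclideanSpace ℝ (Fin d)))
    (θ : EuclideanSpace ℝ (Fin d)) (hθ : ‖θ‖ = 1) (r : ℝ) (hr : 0 < r) :
    ∃ T₀ : ℝ, ∀ t : ℝ, T₀ ≤ t →
      ∀ Γ : Set (EuclideanSpace ℝ (Fin d)), IsClosed Γ → Convex ℝ Γ →
        (0 : EuclideanSpace ℝ (Fin d)) ∈ Γ →
        ¬((t / 3) • 𝔹 ∩ coneL θ (r / 2) ⊆ Γ) →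
        ¬((t / 2) • 𝔹 ∩ coneL θ r ⊆ plusSet (Real.log t) Γ) := by
  classical
  obtain ⟨ρ, hρpos, hρball⟩ : ∃ ρ > 0, Metric.closedBall (0:EuclideanSpace ℝ (Fin d)) ρ ⊆ 𝔹 :=
    (Metric.nhds_basis_closedBall.mem_iff.mp h𝔹0)
  have h0B : (0:EuclideanSpace ℝ (Fin d)) ∈ 𝔹 := mem_of_mem_nhds h𝔹0
  have hr2 : (0:ℝ) < 1 + r/2 := by linarith
  obtain ⟨c, hc_def⟩ : ∃ c : ℝ, c = min (ρ/6) (r*ρ/(6*(1+r/2))) := ⟨_, rfl⟩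
  have hcpos : 0 < c := hc_def ▸ lt_min (by positivity) (by positivity)
  have hev : ∀ᶠ t : ℝ in Filter.atTop,
      (1 ≤ Real.log t ∧ ‖Real.log t‖ ≤ c * ‖t‖) ∧ (0:ℝ) ≤ t :=
    (((Real.tendsto_log_atTop.eventually_ge_atTop 1).and
      (Real.isLittleO_log_id_atTop.def hcpos)).and (Filter.eventually_ge_atTop 0))
  obtain ⟨T₀, hT₀⟩ := Filter.eventually_atTop.mp hev
  refine ⟨T₀, fun t ht Γ hΓcl hΓconv hΓ0 hnotsub hsub => ?_⟩
  obtain ⟨⟨hl1, hlognorm⟩, ht0⟩ := hT₀ t ht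
  obtain ⟨l, hl_def⟩ : ∃ l : ℝ, l = Real.log t := ⟨_, rfl⟩
  rw [← hl_def] at hl1 hlognorm hsub
  have hlpos : (0:ℝ) < l := by linarith
  have hlogle : l ≤ c * t := by
    rwa [Real.norm_eq_abs, Real.norm_eq_abs, abs_of_nonneg hlpos.le, abs_of_nonneg ht0]
      at hlognorm
  have htpos : (0:ℝ) < t := by
    rcases ht0.eq_or_lt with h | h
    · exfalso
      have : l ≤ 0 := by
        rw [hl_def]
        exact Real.log_nonpos h.le (by rw [← h]; norm_num)
      linarith
    · exact h
  -- numeric conditions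
  have hcondC : t/3 + l/ρ ≤ t/2 := by
    have h1 : l ≤ (ρ/6) * t := hlogle.trans
      (mul_le_mul_of_nonneg_right (hc_def ▸ min_le_left _ _) ht0)
    rw [div_add_div _ _ (by norm_num) hρpos.ne', div_le_div_iff₀ (by positivity) (by norm_num)]
    nlinarith
  obtain ⟨μ, hμ_def⟩ : ∃ μ : ℝ, μ = 2*l/r := ⟨_, rfl⟩
  have hμpos : 0 < μ := by rw [hμ_def]; positivity
  have hμr : μ * r = 2 * l := by rw [hμ_def]; field_simp
  obtain ⟨K, hK_def⟩ : ∃ K : ℝ, K = μ * (1 + r/2) := ⟨_, rfl⟩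
  have hKpos : 0 < K := by rw [hK_def]; positivity
  have hcondB : K/ρ ≤ t/3 := by
    have h1 : l ≤ (r*ρ/(6*(1+r/2))) * t := hlogle.trans
      (mul_le_mul_of_nonneg_right (hc_def ▸ min_le_right _ _) ht0)
    rw [div_mul_eq_mul_div, le_div_iff₀ (by positivity)] at h1
    -- h1 : l * (6 * (1 + r/2)) ≤ r * ρ * t
    have hKr : K * 3 * r = 6 * l * (1+r/2) := by rw [hK_def]; nlinarith [hμr]
    rw [div_le_div_iff₀ hρpos (by norm_num)]
    nlinarith [hKr, h1, hr]
  -- extract a bad point x ∈ (t/3)𝔹 ∩ L(θ, r/2), x ∉ Γ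
  obtain ⟨x, ⟨hxB, hxL⟩, hxΓ⟩ := Set.not_subset.mp hnotsub
  obtain ⟨a, ha0, v, hvball, hxav⟩ := hxL
  have hxne : x ≠ 0 := fun h => hxΓ (h ▸ hΓ0)
  have hxnorm : 0 < ‖x‖ := norm_pos_iff.mpr hxne
  have hvθ : ‖v - θ‖ ≤ r/2 := by rwa [Metric.mem_closedBall, dist_eq_norm] at hvball
  have hvnorm : ‖v‖ ≤ 1 + r/2 := by
    calc ‖v‖ = ‖θ + (v - θ)‖ := by rw [show θ + (v - θ) = v from by abel]
    _ ≤ ‖θ‖ + ‖v - θ‖ := norm_add_le _ _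
    _ ≤ 1 + r/2 := by rw [hθ]; linarith
  -- rescale x so it has norm at least K
  obtain ⟨lam, hlam_def⟩ : ∃ lam : ℝ, lam = max 1 (K / ‖x‖) := ⟨_, rfl⟩
  have hlam1 : 1 ≤ lam := hlam_def ▸ le_max_left _ _
  have hlampos : 0 < lam := lt_of_lt_of_le one_pos hlam1
  obtain ⟨x', hx'_def⟩ : ∃ y : EuclideanSpace ℝ (Fin d), y = lam • x := ⟨_, rfl⟩
  have hx'Γ : x' ∉ Γ := by
    intro h
    apply hxΓ
    have hxeq : x = lam⁻¹ • x' + (1 - lam⁻¹) • (0:EuclideanSpace ℝ (Fin d)) := by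
      rw [hx'_def, smul_smul, inv_mul_cancel₀ hlampos.ne', one_smul, smul_zero, add_zero]
    rw [hxeq]
    exact hΓconv h hΓ0 (by positivity) (by
      have : lam⁻¹ ≤ 1 := inv_le_one_of_one_le₀ hlam1
      linarith) (by ring)
  have hKx' : K ≤ ‖x'‖ := by
    rw [hx'_def, norm_smul, Real.norm_eq_abs, abs_of_pos hlampos]
    calc K = (K / ‖x‖) * ‖x‖ := by field_simp
    _ ≤ lam * ‖x‖ :=
      mul_le_mul_of_nonneg_right (hlam_def ▸ le_max_right 1 (K / ‖x‖)) (norm_nonneg _)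
  have hx'B : x' ∈ (t/3) • 𝔹 := by
    rcases le_total (K / ‖x‖) 1 with hc1 | hc1
    · have hlam_eq : lam = 1 := hlam_def ▸ max_eq_left hc1
      rw [hx'_def, hlam_eq, one_smul]; exact hxB
    · have hlameq : lam = K / ‖x‖ := hlam_def ▸ max_eq_right hc1
      have hnx' : ‖x'‖ = K := by
        rw [hx'_def, norm_smul, Real.norm_eq_abs, abs_of_pos hlampos, hlameq]
        field_simp
      have hmem : x' ∈ (K/ρ) • 𝔹 := by
        refine ⟨(ρ/K) • x', hρball ?_, ?_⟩
        · rw [Metric.mem_closedBall, dist_zero_right, norm_smul, Real.norm_eq_abs,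
            abs_of_pos (by positivity), hnx', div_mul_cancel₀ _ hKpos.ne']
        · show (K/ρ) • ((ρ/K) • x') = x'
          rw [smul_smul, div_mul_div_comm, mul_comm K ρ, div_self (by positivity), one_smul]
      exact smul_set_subset_smul_set_of_le h𝔹conv h0B (by positivity) hcondB hmem
  -- the cone coefficient of x'
  obtain ⟨a', ha'_def⟩ : ∃ b : ℝ, b = lam * a := ⟨_, rfl⟩
  have ha'0 : 0 ≤ a' := ha'_def ▸ mul_nonneg hlampos.le ha0
  have hx'av : x' = a' • v := by rw [hx'_def, hxav, smul_smul, ha'_def]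
  have ha'pos : 0 < a' := by
    rcases ha'0.eq_or_lt with h | h
    · exfalso
      apply hxne
      rw [hxav]
      have ha : a = 0 := by
        by_contra hane
        exact (mul_ne_zero hlampos.ne' hane) (ha'_def ▸ h).symm
      rw [ha, zero_smul]
    · exact h
  have hμa' : μ ≤ a' := by
    have h1 : μ * (1 + r/2) ≤ a' * ‖v‖ := by
      rw [← hK_def]
      calc K ≤ ‖x'‖ := hKx'
      _ = a' * ‖v‖ := by rw [hx'av, norm_smul, Real.norm_eq_abs, abs_of_pos ha'pos]
    have h2 : a' * ‖v‖ ≤ a' * (1 + r/2) := mul_le_mul_of_nonneg_left hvnorm ha'0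
    exact le_of_mul_le_mul_right (h1.trans h2) hr2
  have hla' : l ≤ a' * (r/2) := by
    have h2 : μ * (r/2) ≤ a' * (r/2) := mul_le_mul_of_nonneg_right hμa' (by positivity)
    nlinarith [hμr]
  -- separating functional
  obtain ⟨w, cc, ε, hw1, hεpos, hwΓ, hwx'⟩ := separation_vector hΓcl hΓconv hΓ0 hx'Γ
  obtain ⟨z, hz_def⟩ : ∃ z : EuclideanSpace ℝ (Fin d), z = x' + l • w := ⟨_, rfl⟩
  -- z ∈ (t/2)𝔹
  have hzB : z ∈ (t/2) • 𝔹 := by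
    have hlw : l • w ∈ (l/ρ) • 𝔹 := by
      refine ⟨ρ • w, hρball ?_, ?_⟩
      · rw [Metric.mem_closedBall, dist_zero_right, norm_smul, Real.norm_eq_abs,
          abs_of_pos hρpos, hw1, mul_one]
      · show (l/ρ) • (ρ • w) = l • w
        rw [smul_smul, div_mul_cancel₀ _ hρpos.ne']
    have hsum : z ∈ (t/3) • 𝔹 + (l/ρ) • 𝔹 := hz_def ▸ Set.add_mem_add hx'B hlw
    rw [← Convex.add_smul h𝔹conv (by positivity) (by positivity)] at hsum
    exact smul_set_subset_smul_set_of_le h𝔹conv h0B (by positivity) hcondC hsum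
  -- z ∈ coneL θ r
  have hzL : z ∈ coneL θ r := by
    refine ⟨a', ha'pos.le, v + (a'⁻¹ * l) • w, ?_, ?_⟩
    · rw [Metric.mem_closedBall, dist_eq_norm]
      have hspos : 0 < a'⁻¹ * l := mul_pos (inv_pos.mpr ha'pos) hlpos
      have hs : a'⁻¹ * l ≤ r/2 := by
        rw [inv_mul_le_iff₀ ha'pos]
        linarith [hla']
      calc ‖v + (a'⁻¹ * l) • w - θ‖ = ‖(v - θ) + (a'⁻¹ * l) • w‖ := by
            rw [show v + (a'⁻¹ * l) • w - θ = (v - θ) + (a'⁻¹ * l) • w from by abel]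
      _ ≤ ‖v - θ‖ + ‖(a'⁻¹ * l) • w‖ := norm_add_le _ _
      _ = ‖v - θ‖ + (a'⁻¹ * l) := by
          rw [norm_smul, Real.norm_eq_abs, abs_of_pos hspos, hw1, mul_one]
      _ ≤ r/2 + r/2 := add_le_add hvθ hs
      _ = r := by ring
    · rw [hz_def, hx'av, smul_add, smul_smul, ← mul_assoc, mul_inv_cancel₀ ha'pos.ne', one_mul]
  -- z ∉ plusSet l Γ
  have hzP : z ∉ plusSet l Γ := by
    intro hz
    have hΓne : Γ.Nonempty := ⟨0, hΓ0⟩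
    have hkey : ∀ γ ∈ Γ, l + ε ≤ dist z γ := by
      intro γ hγ
      have hinner : inner (𝕜 := ℝ) w (z - γ) ≤ ‖z - γ‖ := by
        calc inner (𝕜 := ℝ) w (z - γ) ≤ ‖w‖ * ‖z - γ‖ := real_inner_le_norm _ _
        _ = ‖z - γ‖ := by rw [hw1, one_mul]
      have hww : inner (𝕜 := ℝ) w w = 1 := by
        rw [real_inner_self_eq_norm_sq, hw1]; norm_num
      have hexp : inner (𝕜 := ℝ) w (z - γ) =
          inner (𝕜 := ℝ) w x' + l * inner (𝕜 := ℝ) w w - inner (𝕜 := ℝ) w γ := by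
        rw [hz_def, inner_sub_right, inner_add_right, real_inner_smul_right]
      have hge : l + ε ≤ inner (𝕜 := ℝ) w (z - γ) := by
        rw [hexp, hww]
        have := hwΓ γ hγ
        linarith [hwx']
      rw [dist_eq_norm]
      linarith
    have hzle : Metric.infDist z Γ ≤ l := hz
    have hlt : Metric.infDist z Γ < l + ε := lt_of_le_of_lt hzle (by linarith)
    obtain ⟨γ, hγ, hdlt⟩ := (Metric.infDist_lt_iff hΓne).mp hlt
    exact absurd hdlt (not_lt.mpr (hkey γ hγ))
  exact hzP (hsub ⟨hzB, hzL⟩)
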